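/- Let C be a ℂ-linear braided monoidal category, S an invertible object, and M, N objects of C. For an object X let m_{S,X} ∈ End_C(X) be the unique endomorphism with 𝓜_{S,X} = id_S ⊗ m_{S,X}. Then m_{S,M⊗N} = m_{S,M} ⊗ m_{S,N} as endomorphisms of M ⊗ N. Consequently, if α, β ∈ ℂ and p, q ≥ 0 are such that (m_{S,M} − α·id_M)^{p+1} = 0 and (m_{S,N} − β·id_N)^{q+1} = 0, then (m_{S,M⊗N} − αβ·id_{M⊗N})^{p+q+1} = 0. -/

import Mathlib

open CategoryTheory MonoidalCategory

/-- The `n`-fold composition power `f ≫ f ≫ ⋯ ≫ f` of an endomorphism `f`. -/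
def compPow {C : Type*} [Category C] {M : C} (f : M ⟶ M) : ℕ → (M ⟶ M)
  | 0 => 𝟙 M
  | (n + 1) => f ≫ compPow f n

section Aux

variable {C : Type*} [Category C]

lemma compPow_eq_pow {M : C} (f : End M) (n : ℕ) : compPow f n = f ^ n := by
  induction n with
  | zero => exact (pow_zero f).symm
  | succ n ih => show f ≫ compPow f n = f ^ (n + 1); rw [ih, pow_succ]; rfl

variable [MonoidalCategory C]

lemma my_whiskerLeft_inj (S Sd : C) [ExactPairing S Sd] (hev : IsIso (ε_ S Sd))
    {X Y : C} (f g : X ⟶ Y) (h : S ◁ f = S ◁ g) : f = g := by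
  have h1 : Sd ◁ (S ◁ f) = Sd ◁ (S ◁ g) := by rw [h]
  have h2 : (Sd ⊗ S) ◁ f = (Sd ⊗ S) ◁ g := by
    rw [← cancel_mono (α_ Sd S Y).hom, associator_naturality_right,
      associator_naturality_right, h1]
  have h5 : ε_ S Sd ▷ X ≫ 𝟙_ _ ◁ f = ε_ S Sd ▷ X ≫ 𝟙_ _ ◁ g := by
    rw [← whisker_exchange, ← whisker_exchange, h2]
  have h6 : (𝟙_ _) ◁ f = (𝟙_ _) ◁ g := (cancel_epi (ε_ S Sd ▷ X)).mp h5
  rw [id_whiskerLeft, id_whiskerLeft] at h6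
  exact (cancel_mono (λ_ Y).inv).mp ((cancel_epi (λ_ X).hom).mp h6)

lemma compPow_whiskerRight {M : C} (f : M ⟶ M) (N : C) (n : ℕ) :
    compPow (f ▷ N) n = compPow f n ▷ N := by
  induction n with
  | zero => simp [compPow]
  | succ n ih => simp [compPow, ih]

lemma compPow_whiskerLeft {N : C} (f : N ⟶ N) (M : C) (n : ℕ) :
    compPow (M ◁ f) n = M ◁ compPow f n := by
  induction n with
  | zero => simp [compPow]
  | succ n ih => simp [compPow, ih]

lemma monodromy_tensor [BraidedCategory C]
    (S M N : C) (mSM : M ⟶ M) (mSN : N ⟶ N)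
    (hM : (β_ S M).hom ≫ (β_ M S).hom = S ◁ mSM)
    (hN : (β_ S N).hom ≫ (β_ N S).hom = S ◁ mSN) :
    (β_ S (M ⊗ N)).hom ≫ (β_ (M ⊗ N) S).hom = S ◁ (mSM ⊗ₘ mSN) := by
  rw [BraidedCategory.braiding_tensor_right_hom, BraidedCategory.braiding_tensor_left_hom,
    MonoidalCategory.tensorHom_def]
  slice_lhs 5 6 => rw [Iso.inv_hom_id]
  simp only [Category.id_comp, Category.comp_id, Category.assoc]
  slice_lhs 4 5 => rw [← MonoidalCategory.whiskerLeft_comp, hN]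
  slice_lhs 4 5 => rw [associator_inv_naturality_right]
  slice_lhs 5 6 => rw [whisker_exchange]
  slice_lhs 3 4 => rw [Iso.hom_inv_id]
  simp only [Category.id_comp, Category.comp_id, Category.assoc]
  slice_lhs 2 3 => rw [← comp_whiskerRight, hM]
  slice_lhs 3 4 => rw [associator_naturality_right]
  slice_lhs 1 3 => rw [← whisker_assoc_symm]
  simp [MonoidalCategory.whiskerLeft_comp]

lemma ring_lemma {R : Type*} [Ring R] [Algebra ℂ R] (A B : R) (a b : ℂ) (p q : ℕ)
    (hcomm : Commute A B) (hA : A ^ (p + 1) = 0) (hB : B ^ (q + 1) = 0) :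
    ((B + b • 1) * (A + a • 1) - (a * b) • 1) ^ (p + q + 1) = 0 := by
  have key : (B + b • 1) * (A + a • 1) - (a * b) • 1 = (B + b • 1) * A + a • B := by
    simp only [mul_add, add_mul, smul_mul_assoc, mul_smul_comm, smul_smul, smul_add,
      mul_one, one_mul, mul_comm b a]
    abel
  rw [key]
  have hBA : Commute (B + b • 1) A :=
    hcomm.symm.add_left (by simpa using (Commute.one_left A).smul_left b)
  have hUV : Commute ((B + b • 1) * A) (a • B) := by
    refine (Commute.mul_left ?_ ?_).smul_right a
    · exact (Commute.refl B).add_left (by simpa using (Commute.one_left B).smul_left b)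
    · exact hcomm
  have hU : ((B + b • 1) * A) ^ (p + 1) = 0 := by rw [hBA.mul_pow, hA, mul_zero]
  have hV : (a • B) ^ (q + 1) = 0 := by rw [smul_pow, hB, smul_zero]
  exact hUV.add_pow_eq_zero_of_add_le_succ_of_pow_eq_zero hU hV (by omega)

end Aux

/-- **Multiplicativity of monodromy operators of a simple current.**
Let `C` be a `ℂ`-linear braided monoidal category, `S` an invertible object (two-sided
dual `Sd` with evaluation/coevaluation isomorphisms), and `M, N` objects.  If `m_{S,X}`
denotes the unique endomorphism of `X` with `𝓜_{S,X} = id_S ⊗ m_{S,X}`, then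
`m_{S,M⊗N} = m_{S,M} ⊗ m_{S,N}`; consequently, if `(m_{S,M} − α)^{p+1} = 0` and
`(m_{S,N} − β)^{q+1} = 0` then `(m_{S,M⊗N} − αβ)^{p+q+1} = 0`. -/
theorem stmt_3 {C : Type*} [Category C] [Preadditive C] [CategoryTheory.Linear ℂ C]
    [MonoidalCategory C] [BraidedCategory C] [MonoidalPreadditive C] [MonoidalLinear ℂ C]
    (S Sd : C) [ExactPairing S Sd]
    (hev : IsIso (ε_ S Sd)) (hcoev : IsIso (η_ S Sd))
    (M N : C) (mSM : M ⟶ M) (mSN : N ⟶ N) (mSMN : M ⊗ N ⟶ M ⊗ N)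
    (hM : (β_ S M).hom ≫ (β_ M S).hom = S ◁ mSM)
    (hN : (β_ S N).hom ≫ (β_ N S).hom = S ◁ mSN)
    (hMN : (β_ S (M ⊗ N)).hom ≫ (β_ (M ⊗ N) S).hom = S ◁ mSMN) :
    mSMN = mSM ⊗ₘ mSN ∧
    ∀ (a b : ℂ) (p q : ℕ),
      compPow (mSM - a • 𝟙 M) (p + 1) = 0 →
      compPow (mSN - b • 𝟙 N) (q + 1) = 0 →
      compPow (mSMN - (a * b) • 𝟙 (M ⊗ N)) (p + q + 1) = 0 := by
  have hmul : mSMN = mSM ⊗ₘ mSN := by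
    apply my_whiskerLeft_inj S Sd hev
    rw [← hMN, monodromy_tensor S M N mSM mSN hM hN]
  refine ⟨hmul, fun a b p q hp hq => ?_⟩
  set A : End (M ⊗ N) := (mSM - a • 𝟙 M) ▷ N with hA_def
  set B : End (M ⊗ N) := M ◁ (mSN - b • 𝟙 N) with hB_def
  have hA : A ^ (p + 1) = 0 := by
    rw [← compPow_eq_pow, hA_def, compPow_whiskerRight, hp]
    simp
  have hB : B ^ (q + 1) = 0 := by
    rw [← compPow_eq_pow, hB_def, compPow_whiskerLeft, hq]
    simp
  have hcomm : Commute A B := by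
    show A * B = B * A
    show B ≫ A = A ≫ B
    exact whisker_exchange _ _
  have sub_wr : ∀ (f g : M ⟶ M), (f - g) ▷ N = f ▷ N - g ▷ N := by
    intro f g
    rw [sub_eq_add_neg, MonoidalPreadditive.add_whiskerRight, ← neg_one_smul ℂ g,
      MonoidalLinear.smul_whiskerRight, neg_one_smul, ← sub_eq_add_neg]
  have wl_sub : ∀ (f g : N ⟶ N), M ◁ (f - g) = M ◁ f - M ◁ g := by
    intro f g
    rw [sub_eq_add_neg, MonoidalPreadditive.whiskerLeft_add, ← neg_one_smul ℂ g,
      MonoidalLinear.whiskerLeft_smul, neg_one_smul, ← sub_eq_add_neg]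
  have hD : mSMN - (a * b) • 𝟙 (M ⊗ N) =
      ((B + b • 1) * (A + a • 1) - (a * b) • 1 : End (M ⊗ N)) := by
    rw [End.mul_def, End.one_def, hA_def, hB_def, hmul, MonoidalCategory.tensorHom_def, sub_wr, wl_sub]
    simp
  rw [compPow_eq_pow, hD]
  exact ring_lemma A B a b p q hcomm hA hB
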